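/- For integers d2 ≥ d1 ≥ 2 and any real k ∈ [-d1/d2, 1], the cubic ω₂(k) = (2d1²d2² - d1d2³ + d2³ - d2²)k³ + (4d1³d2 - 4d1²d2² - 2d1²d2 + 4d1d2² - 2d1d2)k² + (2d1⁴ - 5d1³d2 - 2d1³ + 5d1²d2)k - 2d1⁴ + 2d1³ is strictly negative. -/
import Mathlib
set_option maxHeartbeats 1000000


/-- ω₂(k) < 0 for k ∈ [-d1/d2, 1]. -/
theorem stmt_4 (d1 d2 : ℕ) (h1 : 2 ≤ d1) (h2 : d1 ≤ d2) (k : ℝ)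
    (hk1 : -(d1 : ℝ)/d2 ≤ k) (hk2 : k ≤ 1) :
    ((2*(d1:ℝ)^2*d2^2 - d1*d2^3 + d2^3 - d2^2) * k^3
      + (4*(d1:ℝ)^3*d2 - 4*d1^2*d2^2 - 2*d1^2*d2 + 4*d1*d2^2 - 2*d1*d2) * k^2
      + (2*(d1:ℝ)^4 - 5*d1^3*d2 - 2*d1^3 + 5*d1^2*d2) * k
      - 2*(d1:ℝ)^4 + 2*d1^3) < 0 := by
  have ha2 : (2:ℝ) ≤ (d1:ℝ) := by exact_mod_cast h1
  have hab : (d1:ℝ) ≤ (d2:ℝ) := by exact_mod_cast h2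
  set a : ℝ := (d1 : ℝ)
  set b : ℝ := (d2 : ℝ)
  have hb0 : (0:ℝ) < b := by linarith
  have ha0 : (0:ℝ) < a := by linarith
  have ht : 0 ≤ b * k + a := by nlinarith [(div_le_iff₀ hb0).mp hk1]
  have hA : (0:ℝ) < a*b+a-b := by nlinarith
  -- positivity of quadratic 2M u^2 - a(2a+1)u + a^2
  have hquad : 0 < 2*(a*b+a-b)*(b*k+a)^2 - a*(2*a+1)*(b*k+a) + a^2 := by
    have h8 : 0 < 8*(a*b+a-b) - (2*a+1)^2 := by
      nlinarith [mul_nonneg (by linarith : (0:ℝ) ≤ a-1) (by linarith : (0:ℝ) ≤ b-a)]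
    nlinarith [mul_pos (mul_pos ha0 ha0) h8,
      sq_nonneg (4*(a*b+a-b)*(b*k+a) - a*(2*a+1)), hA]
  -- main decomposition target
  have key : ∀ x : ℝ, x = a*(2*(a*b+a-b)*(b*k+a)^2 - a*(2*a+1)*(b*k+a) + a^2)
      - (2*a^2-1-a*b+b)*(b*k+a)^2*(b*k) →
      0 < x →
      ((2*a^2*b^2 - a*b^3 + b^3 - b^2) * k^3
        + (4*a^3*b - 4*a^2*b^2 - 2*a^2*b + 4*a*b^2 - 2*a*b) * k^2
        + (2*a^4 - 5*a^3*b - 2*a^3 + 5*a^2*b) * k - 2*a^4 + 2*a^3) < 0 := by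
    intro x hx hxpos
    have hb2 : (0:ℝ) < b^2 := by positivity
    nlinarith [mul_pos hb2 hxpos, pow_pos hb0 3, hx]
  apply key _ rfl
  rcases le_or_gt (2*a^2-1-a*b+b) 0 with hC | hC
  · -- C ≤ 0 : expr = a((2M+C)u² - a(2a+1)u + a²) + (-C)u³
    have hquad2 : 0 < (2*(a*b+a-b) + (2*a^2-1-a*b+b))*(b*k+a)^2 - a*(2*a+1)*(b*k+a) + a^2 := by
      have h8 : 0 < 4*(2*(a*b+a-b) + (2*a^2-1-a*b+b)) - (2*a+1)^2 := by
        nlinarith [mul_nonneg (by linarith : (0:ℝ) ≤ a-1) (by linarith : (0:ℝ) ≤ b-a)]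
      have hApC : (0:ℝ) < 2*(a*b+a-b) + (2*a^2-1-a*b+b) := by nlinarith
      nlinarith [mul_pos (mul_pos ha0 ha0) h8,
        sq_nonneg (2*(2*(a*b+a-b) + (2*a^2-1-a*b+b))*(b*k+a) - a*(2*a+1)), hApC]
    have hcube : 0 ≤ -(2*a^2-1-a*b+b) * (b*k+a)^3 :=
      mul_nonneg (by linarith) (pow_nonneg ht 3)
    nlinarith [mul_pos ha0 hquad2, hcube]
  · rcases le_or_gt k 0 with hk0 | hk0
    · -- C > 0, k ≤ 0 : second term = C u² (-bk) ≥ 0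
      have h2 : 0 ≤ (2*a^2-1-a*b+b) * (b*k+a)^2 * (-(b*k)) := by
        apply mul_nonneg (mul_nonneg (le_of_lt hC) (sq_nonneg _))
        nlinarith
      nlinarith [mul_pos ha0 hquad, h2]
    · -- hard case: C > 0, k > 0
      have hg0 : 0 < 2*a^2*(a*b+a-b) - a^2*(2*a+1) := by
        nlinarith [mul_nonneg (by linarith : (0:ℝ) ≤ a-1) (by linarith : (0:ℝ) ≤ b-2),
          mul_pos (mul_pos ha0 ha0) (by nlinarith [mul_nonneg (by linarith : (0:ℝ) ≤ a-1) (by linarith : (0:ℝ) ≤ b-1)] : (0:ℝ) < 2*(a*b+a-b) - 2*a - 1)]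
      have hgb : 0 < (a+b)*(2*a^2-2*a*b+b+b^2*(a-1)) - a^2*(2*a+1) := by
        nlinarith [mul_nonneg hC.le (by linarith : (0:ℝ) ≤ b-a), mul_nonneg hC.le (by linarith : (0:ℝ) ≤ a-2),
          mul_nonneg (mul_nonneg (by linarith : (0:ℝ) ≤ a-2) (by linarith : (0:ℝ) ≤ b-a)) (by linarith : (0:ℝ) ≤ b),
          sq_nonneg (b-a), mul_nonneg (by linarith : (0:ℝ) ≤ a-2) (by linarith : (0:ℝ) ≤ b-a),
          mul_pos ha0 hb0,
          mul_nonneg (mul_nonneg (by linarith : (0:ℝ) ≤ a-2) (by linarith : (0:ℝ) ≤ a)) (by linarith : (0:ℝ) ≤ b),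
          sq_nonneg (a-2), sq_nonneg (b-2)]
      have hv : 0 ≤ b*k := by positivity
      have hbv : 0 ≤ b - b*k := by nlinarith
      have X1 : 0 ≤ (b*k+a) * ((b - b*k) * (2*a^2*(a*b+a-b) - a^2*(2*a+1))) :=
        mul_nonneg ht (mul_nonneg hbv hg0.le)
      have X2 : 0 ≤ (b*k+a) * ((b*k) * ((a+b)*(2*a^2-2*a*b+b+b^2*(a-1)) - a^2*(2*a+1))) :=
        mul_nonneg ht (mul_nonneg hv hgb.le)
      have X3 : 0 ≤ (b*k+a) * (b * ((2*a^2-1-a*b+b) * ((b*k) * (b - b*k)))) :=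
        mul_nonneg ht (mul_nonneg hb0.le (mul_nonneg hC.le (mul_nonneg hv hbv)))
      have hbexpr : 0 < b * (a*(2*(a*b+a-b)*(b*k+a)^2 - a*(2*a+1)*(b*k+a) + a^2)
          - (2*a^2-1-a*b+b)*(b*k+a)^2*(b*k)) := by
        nlinarith [X1, X2, X3, mul_pos hb0 (mul_pos (mul_pos ha0 ha0) ha0)]
      nlinarith [hbexpr, hb0]
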